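/- Suppose 2 ≤ k ≤ n are integers with n even and n − k ≤ 2, and f : V(C_n) → {1,...,k} is a k-color weak maximizer of the Wiener index W on C_n. Then W(f) = max{ W(f') : f' a k-color weak maximizer of W on C_n }. -/

import Mathlib

open SimpleGraph Finset

/-- The cycle graph on vertex set `ZMod n`, with an edge between `i` and `i+1` (mod `n`). -/
def cycleGraphZMod (n : ℕ) : SimpleGraph (ZMod n) :=
  SimpleGraph.fromRel (fun u v => v = u + 1)

/-- The Wiener index of a set of vertices: the sum of all pairwise geodesic distances. -/
noncomputable def wienerSet {V : Type*} [Fintype V] [DecidableEq V]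
    (G : SimpleGraph V) (A : Finset V) : ℕ :=
  (∑ p ∈ A.offDiag, G.dist p.1 p.2) / 2

/-- `A` is a maximizer of `W` on `G`. -/
def IsWienerMaximizer {V : Type*} [Fintype V] [DecidableEq V]
    (G : SimpleGraph V) (A : Finset V) : Prop :=
  ∀ B : Finset V, B.card = A.card → wienerSet G B ≤ wienerSet G A

/-- `A ⊆ V(C_n)` is almost good. -/
def AlmostGood (n : ℕ) (A : Finset (ZMod n)) : Prop :=
  A.card = 1 ∨ A.card = n - 1 ∨
    ∃ c₁ c₂ : ((cycleGraphZMod n).induce (↑A : Set (ZMod n))).ConnectedComponent,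
      c₁ ≠ c₂ ∧ (∀ c, c = c₁ ∨ c = c₂) ∧
      (c₁.supp.ncard : ℤ) - (c₂.supp.ncard : ℤ) ≤ 1 ∧
      (c₂.supp.ncard : ℤ) - (c₁.supp.ncard : ℤ) ≤ 1

/-- `A ⊆ V(C_n)` is good: both `A` and its complement are almost good. -/
def GoodSet (n : ℕ) [NeZero n] (A : Finset (ZMod n)) : Prop :=
  AlmostGood n A ∧ AlmostGood n (Finset.univ \ A)

/-- The color class of color `i` for the coloring `f`. -/
def colorClass {V : Type*} [Fintype V] {k : ℕ} (f : V → Fin k) (i : Fin k) : Finset V :=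
  Finset.univ.filter (fun v => f v = i)

/-- The Wiener index of a coloring: the sum of the Wiener indices of its color classes. -/
noncomputable def wienerColoring {V : Type*} [Fintype V] [DecidableEq V] {k : ℕ}
    (G : SimpleGraph V) (f : V → Fin k) : ℕ :=
  ∑ i : Fin k, wienerSet G (colorClass f i)

/-- The type of a coloring, as the multiset of cardinalities of its color classes
(equality of multisets is equality of the nondecreasing rearrangements). -/
def colorType {V : Type*} [Fintype V] {k : ℕ} (f : V → Fin k) : Multiset ℕ :=
  (Finset.univ : Finset (Fin k)).val.map (fun i => (colorClass f i).card)

/-- `f` is a `k`-color weak maximizer of `W` on `G`. -/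
def IsWeakMaximizer {V : Type*} [Fintype V] [DecidableEq V] {k : ℕ}
    (G : SimpleGraph V) (f : V → Fin k) : Prop :=
  Function.Surjective f ∧ ∀ g : V → Fin k, Function.Surjective g →
    colorType g = colorType f → wienerColoring G g ≤ wienerColoring G f

/-- The coloring obtained from `f` by swapping the colors of `u` and `v`. -/
def swapColors {V α : Type*} [DecidableEq V] (f : V → α) (u v : V) : V → α :=
  f ∘ Equiv.swap u v

/-- `f` is a `k`-color local weak maximizer of `W` on `G`. -/
def IsLocalWeakMaximizer {V : Type*} [Fintype V] [DecidableEq V] {k : ℕ}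
    (G : SimpleGraph V) (f : V → Fin k) : Prop :=
  Function.Surjective f ∧ ∀ u v : V, G.Adj u v →
    wienerColoring G (swapColors f u v) ≤ wienerColoring G f

/-- The number of vertices to the left of `u` in the path that get the same color as `u`. -/
def leftCount {n k : ℕ} (f : Fin n → Fin k) (u : Fin n) : ℕ :=
  (Finset.univ.filter (fun w => w < u ∧ f w = f u)).card

/-- The number of vertices to the right of `u` in the path that get the same color as `u`. -/
def rightCount {n k : ℕ} (f : Fin n → Fin k) (u : Fin n) : ℕ :=
  (Finset.univ.filter (fun w => u < w ∧ f w = f u)).card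

/-- The sum of the `j` largest entries of a multiset of naturals. -/
def sumLargest (s : Multiset ℕ) (j : ℕ) : ℕ :=
  (((s.sort (· ≤ ·)).reverse).take j).sum

/-- `x ≺ y` : `x` is majorized by `y`. -/
def MajorizedBy (x y : Multiset ℕ) : Prop :=
  x.card = y.card ∧ x.sum = y.sum ∧ ∀ j, sumLargest x j ≤ sumLargest y j

/-- The reverse Robin Hood transfer `R_{j,j'}` applied to the (sorted) list `t`,
with `j ≤ j'` zero-indexed: subtract `1` from the `j`-th entry and add `1` to the `j'`-th
entry; the result is recorded as a multiset (i.e. up to rearrangement). -/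
def rhTransfer (t : List ℕ) (j j' : ℕ) : Multiset ℕ :=
  ↑((t.set j (t.getD j 0 - 1)).set j' ((t.set j (t.getD j 0 - 1)).getD j' 0 + 1))

/-- `t(n,k)` : the unique nondecreasing `k`-tuple of positive integers summing to `n`
whose entries pairwise differ by at most one, as a multiset. -/
def equitableType (n k : ℕ) : Multiset ℕ :=
  Multiset.replicate (k - n % k) (n / k) + Multiset.replicate (n % k) (n / k + 1)

/-- One step of the operation `R`: `s ∈ R({t})`, i.e. `s = t` or `s` is obtained from `t` by
a reverse Robin Hood transfer between two entries that are equal and even. -/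
def REstep (t s : Multiset ℕ) : Prop :=
  s = t ∨ ∃ m : ℕ, Even m ∧ 2 ≤ t.count m ∧
    s = (t - Multiset.replicate 2 m) + {m - 1, m + 1}

/-- `s ∈ R^∞({t(n,k)})`. -/
def InRInfty (n k : ℕ) (s : Multiset ℕ) : Prop :=
  Relation.ReflTransGen REstep (equitableType n k) s

set_option linter.unusedSectionVars false

namespace CycleAux
section P1


variable {n : ℕ} [NeZero n]

def phi (n : ℕ) [NeZero n] (a : ZMod n) : ℕ := min a.val (n - a.val)

lemma phi_neg (a : ZMod n) : phi n (-a) = phi n a := by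
  by_cases h : a = 0
  · subst h; simp [phi]
  · have h1 : (-a).val = n - a.val := by rw [ZMod.neg_val]; simp [h]
    have h2 := a.val_lt
    have h3 : a.val ≠ 0 := fun hh => h ((ZMod.val_eq_zero a).mp hh)
    simp only [phi, h1]
    omega

lemma phi_add_one (hn : 2 ≤ n) (a : ZMod n) : phi n (a + 1) ≤ phi n a + 1 := by
  have h1 : (1 : ZMod n).val = 1 := by rw [ZMod.val_one_eq_one_mod]; exact Nat.mod_eq_of_lt (by omega)
  have h2 : (a + 1).val = (a.val + 1) % n := by rw [ZMod.val_add, h1]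
  have h3 := a.val_lt
  have h5 : (a.val + 1) % n = a.val + 1 ∨ ((a.val + 1) % n = 0 ∧ a.val + 1 = n) := by
    rcases Nat.lt_or_ge (a.val + 1) n with h | h
    · exact Or.inl (Nat.mod_eq_of_lt h)
    · have h6 : a.val + 1 = n := by omega
      exact Or.inr ⟨by simp [h6], h6⟩
  unfold phi
  rcases h5 with h5 | ⟨h5, h6⟩ <;> rw [h2, h5] <;> omega

lemma phi_sub_one (hn : 2 ≤ n) (a : ZMod n) : phi n (a - 1) ≤ phi n a + 1 := by
  have : phi n (a - 1) = phi n (-a + 1) := by rw [← phi_neg]; ring_nf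
  rw [this]
  calc phi n (-a + 1) ≤ phi n (-a) + 1 := phi_add_one hn _
    _ = phi n a + 1 := by rw [phi_neg]

lemma adj_add_one (hn : 2 ≤ n) (u : ZMod n) : (cycleGraphZMod n).Adj u (u + 1) := by
  rw [cycleGraphZMod, SimpleGraph.fromRel_adj]
  refine ⟨?_, Or.inl rfl⟩
  intro h
  have h1 : (1 : ZMod n).val = 1 := by rw [ZMod.val_one_eq_one_mod]; exact Nat.mod_eq_of_lt (by omega)
  have : (1 : ZMod n) = 0 := by
    have := congrArg (· - u) h
    simpa using this.symm
  rw [this] at h1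
  simp [ZMod.val_zero] at h1

lemma exists_walk (hn : 2 ≤ n) (u : ZMod n) (m : ℕ) :
    ∃ p : (cycleGraphZMod n).Walk u (u + (m : ZMod n)), p.length = m := by
  induction m with
  | zero => exact ⟨SimpleGraph.Walk.nil.copy rfl (by push_cast; ring), by simp⟩
  | succ m ih =>
    obtain ⟨p, hp⟩ := ih
    exact ⟨(p.concat (adj_add_one hn _)).copy rfl (by push_cast; ring),
      by simp [SimpleGraph.Walk.length_concat, hp]⟩

lemma phi_le_length (hn : 2 ≤ n) {u v : ZMod n} (p : (cycleGraphZMod n).Walk u v) :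
    phi n (v - u) ≤ p.length := by
  induction p with
  | nil => simp [phi]
  | @cons u w v h q ih =>
    rw [SimpleGraph.Walk.length_cons]
    rw [cycleGraphZMod, SimpleGraph.fromRel_adj] at h
    rcases h.2 with h2 | h2
    · -- w = u + 1
      have : v - u = (v - w) + 1 := by rw [h2]; ring
      rw [this]
      exact (phi_add_one hn _).trans (by omega)
    · -- u = w + 1
      have : v - u = (v - w) - 1 := by rw [h2]; ring
      rw [this]
      exact (phi_sub_one hn _).trans (by omega)

lemma dist_le_phi (hn : 2 ≤ n) (u v : ZMod n) :
    (cycleGraphZMod n).dist u v ≤ phi n (v - u) := by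
  have hcast : u + (((v - u).val : ℕ) : ZMod n) = v := by
    rw [ZMod.natCast_rightInverse (v - u)]; ring
  refine le_min ?_ ?_
  · obtain ⟨p, hp⟩ := exists_walk hn u (v - u).val
    calc (cycleGraphZMod n).dist u v ≤ (p.copy rfl hcast).length := SimpleGraph.dist_le _
      _ = (v - u).val := by simpa using hp
  · by_cases h : u = v
    · subst h; simp [SimpleGraph.dist_self]
    · have hvu : v - u ≠ 0 := fun hh => h (by linear_combination (norm := ring_nf) -hh)
      have h1 : (u - v).val = n - (v - u).val := by
        have : u - v = -(v - u) := by ring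
        rw [this, ZMod.neg_val]; simp [hvu]
      rw [SimpleGraph.dist_comm, ← h1]
      obtain ⟨p, hp⟩ := exists_walk hn v (u - v).val
      have hcast2 : v + (((u - v).val : ℕ) : ZMod n) = u := by
        rw [ZMod.natCast_rightInverse (u - v)]; ring
      calc (cycleGraphZMod n).dist v u ≤ (p.copy rfl hcast2).length := SimpleGraph.dist_le _
        _ = (u - v).val := by simpa using hp

lemma cycle_dist_eq (hn : 2 ≤ n) (u v : ZMod n) :
    (cycleGraphZMod n).dist u v = phi n (v - u) := by
  refine le_antisymm (dist_le_phi hn u v) ?_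
  have hreach : (cycleGraphZMod n).Reachable u v := by
    obtain ⟨p, _⟩ := exists_walk hn u (v - u).val
    have hcast : u + (((v - u).val : ℕ) : ZMod n) = v := by
      rw [ZMod.natCast_rightInverse (v - u)]; ring
    exact ⟨p.copy rfl hcast⟩
  obtain ⟨p, hp⟩ := hreach.exists_walk_length_eq_dist
  exact hp ▸ phi_le_length hn p


end P1
section P2

variable {V : Type*} [Fintype V] [DecidableEq V] (G : SimpleGraph V)

lemma offDiag_sum (A : Finset V) :
    ∑ p ∈ A.offDiag, G.dist p.1 p.2 = ∑ x ∈ A, ∑ y ∈ A, G.dist x y := by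
  rw [← Finset.sum_product']
  rw [← Finset.diag_union_offDiag (s := A), Finset.sum_union (Finset.disjoint_diag_offDiag A)]
  have : ∑ p ∈ A.diag, G.dist p.1 p.2 = 0 := by
    refine Finset.sum_eq_zero fun p hp => ?_
    rw [Finset.mem_diag] at hp
    rw [hp.2, SimpleGraph.dist_self]
  rw [this, zero_add]

lemma wienerSet_mono {A B : Finset V} (h : A ⊆ B) : wienerSet G A ≤ wienerSet G B :=
  Nat.div_le_div_right (Finset.sum_le_sum_of_subset (Finset.offDiag_mono h))

lemma wienerSet_small {A : Finset V} (h : A.card ≤ 1) : wienerSet G A = 0 := by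
  unfold wienerSet
  have : ∑ p ∈ A.offDiag, G.dist p.1 p.2 = 0 := by
    refine Finset.sum_eq_zero fun p hp => ?_
    rw [Finset.mem_offDiag] at hp
    exact absurd (Finset.card_le_one.mp h _ hp.1 _ hp.2.1) hp.2.2
  simp [this]

lemma wienerSet_pair {u v : V} (h : u ≠ v) : wienerSet G {u, v} = G.dist u v := by
  unfold wienerSet
  rw [offDiag_sum]
  simp only [Finset.sum_pair h, SimpleGraph.dist_self,
    SimpleGraph.dist_comm (G := G) (u := v) (v := u)]
  omega

lemma wienerSet_triple {u v w : V} (h1 : u ≠ v) (h2 : u ≠ w) (h3 : v ≠ w) :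
    wienerSet G {u, v, w} = G.dist u v + G.dist u w + G.dist v w := by
  unfold wienerSet
  have hu : u ∉ ({v, w} : Finset V) := by simp [h1, h2]
  rw [offDiag_sum]
  rw [show ({u, v, w} : Finset V) = insert u {v, w} from rfl]
  simp only [Finset.sum_insert hu, Finset.sum_pair h3, SimpleGraph.dist_self,
    SimpleGraph.dist_comm (G := G) (u := v) (v := u),
    SimpleGraph.dist_comm (G := G) (u := w) (v := u),
    SimpleGraph.dist_comm (G := G) (u := w) (v := v)]
  omega


end P2
section P3


lemma exists_perm_list {α : Type*} [DecidableEq α] :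
    ∀ (l₁ l₂ : List α), l₁.Nodup → l₂.Nodup → l₁.length = l₂.length →
    ∃ σ : Equiv.Perm α, List.Forall₂ (fun x y => σ x = y) l₁ l₂ := by
  intro l₁
  induction l₁ with
  | nil =>
    intro l₂ _ _ hl
    have : l₂ = [] := List.length_eq_zero_iff.mp hl.symm
    exact ⟨1, by simp [this]⟩
  | cons x l ih =>
    intro l₂ h1 h2 hl
    cases l₂ with
    | nil => simp at hl
    | cons y t =>
      have hx : x ∉ l := (List.nodup_cons.mp h1).1
      have hy : y ∉ t := (List.nodup_cons.mp h2).1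
      obtain ⟨σ, hσ⟩ := ih t (List.nodup_cons.mp h1).2 (List.nodup_cons.mp h2).2
        (by simpa using hl)
      refine ⟨σ.trans (Equiv.swap (σ x) y), ?_⟩
      rw [List.forall₂_cons]
      constructor
      · simp [Equiv.swap_apply_left]
      · rw [List.forall₂_iff_get] at hσ ⊢
        refine ⟨hσ.1, fun i h₁ h₂ => ?_⟩
        have ha : l.get ⟨i, h₁⟩ ∈ l := List.get_mem _ _
        have hb : t.get ⟨i, h₂⟩ ∈ t := List.get_mem _ _
        have hab := hσ.2 i h₁ h₂
        simp only [Equiv.trans_apply, hab]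
        refine Equiv.swap_apply_of_ne_of_ne ?_ ?_
        · rw [← hab]
          exact fun hc => hx (by rwa [σ.injective hc] at ha)
        · exact fun hc => hy (hc ▸ hb)


end P3
section P4

variable {V : Type*} [Fintype V] [DecidableEq V] {k : ℕ}

lemma colorClass_comp (f : V → Fin k) (σ : Equiv.Perm V) (i : Fin k) :
    (colorClass (f ∘ σ) i).card = (colorClass f i).card := by
  refine Finset.card_equiv σ fun v => ?_
  simp [colorClass]

lemma colorType_comp (f : V → Fin k) (σ : Equiv.Perm V) :
    colorType (f ∘ σ) = colorType f := by
  unfold colorType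
  exact Multiset.map_congr rfl fun i _ => colorClass_comp f σ i

lemma sum_card_colorClass (f : V → Fin k) :
    ∑ i : Fin k, (colorClass f i).card = Fintype.card V := by
  rw [← Finset.card_univ]
  exact (Finset.card_eq_sum_card_fiberwise (fun x _ => Finset.mem_univ (f x))).symm

lemma one_le_card_colorClass {f : V → Fin k} (hf : Function.Surjective f) (i : Fin k) :
    1 ≤ (colorClass f i).card := by
  obtain ⟨v, hv⟩ := hf i
  exact Finset.card_pos.mpr ⟨v, by simp [colorClass, hv]⟩

lemma sum_card_sub_one {f : V → Fin k} (hf : Function.Surjective f) :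
    ∑ i : Fin k, ((colorClass f i).card - 1) = Fintype.card V - k := by
  have h1 : ∑ i : Fin k, ((colorClass f i).card - 1 + 1) = Fintype.card V := by
    rw [← sum_card_colorClass f]
    exact Finset.sum_congr rfl fun i _ => Nat.sub_add_cancel (one_le_card_colorClass hf i)
  rw [Finset.sum_add_distrib] at h1
  simp only [Finset.sum_const, Finset.card_univ, Fintype.card_fin, smul_eq_mul, mul_one] at h1
  omega

lemma mem_colorClass {f : V → Fin k} {v : V} {i : Fin k} (h : f v = i) :
    v ∈ colorClass f i := by simp [colorClass, h]


end P4

section P5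
variable {n : ℕ} [NeZero n]

lemma dist_le_half (hn : 2 ≤ n) (u v : ZMod n) :
    (cycleGraphZMod n).dist u v ≤ n / 2 := by
  rw [cycle_dist_eq hn]
  unfold phi
  have := (v - u).val_lt
  rcases Nat.le_total (v - u).val (n - (v - u).val) with h | h
  · rw [min_eq_left h]; omega
  · rw [min_eq_right h]; omega

lemma triple_bound (hn : 2 ≤ n) {u v w : ZMod n} (h1 : u ≠ v) (h2 : u ≠ w) (h3 : v ≠ w) :
    (cycleGraphZMod n).dist u v + (cycleGraphZMod n).dist u w
      + (cycleGraphZMod n).dist v w ≤ n := by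
  rw [cycle_dist_eq hn, cycle_dist_eq hn, cycle_dist_eq hn]
  have hx := (v - u).val_lt
  have hy := (w - u).val_lt
  have hxy : (v - u).val ≠ (w - u).val := by
    intro h
    exact h3 (by have := ZMod.val_injective n h; linear_combination (norm := ring_nf) this)
  rcases Nat.lt_or_ge (v - u).val (w - u).val with h | h
  · have hsub : (w - v).val = (w - u).val - (v - u).val := by
      have he : w - v = (w - u) - (v - u) := by ring
      rw [he, ZMod.val_sub (le_of_lt h)]
    have b1 : phi n (v - u) ≤ (v - u).val := min_le_left _ _
    have b2 : phi n (w - u) ≤ n - (w - u).val := min_le_right _ _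
    have b3 : phi n (w - v) ≤ (w - u).val - (v - u).val := hsub ▸ min_le_left _ _
    omega
  · have hlt : (w - u).val < (v - u).val := lt_of_le_of_ne h hxy.symm
    have hsub : (v - w).val = (v - u).val - (w - u).val := by
      have he : v - w = (v - u) - (w - u) := by ring
      rw [he, ZMod.val_sub (le_of_lt hlt)]
    have b1 : phi n (v - u) ≤ n - (v - u).val := min_le_right _ _
    have b2 : phi n (w - u) ≤ (w - u).val := min_le_left _ _
    have b3 : phi n (w - v) ≤ (v - u).val - (w - u).val := by
      have he : w - v = -(v - w) := by ring
      rw [he, phi_neg, ← hsub]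
      exact min_le_left _ _
    omega

lemma class_bound (hn : 2 ≤ n) (hne : Even n) {A : Finset (ZMod n)} (hA : A.card ≤ 3) :
    wienerSet (cycleGraphZMod n) A ≤ (A.card - 1) * (n / 2) := by
  rcases Nat.lt_or_ge A.card 2 with h | h
  · rw [wienerSet_small _ (by omega)]
    exact Nat.zero_le _
  · rcases Nat.lt_or_ge A.card 3 with h3 | h3
    · have h2 : A.card = 2 := by omega
      obtain ⟨u, v, huv, rfl⟩ := Finset.card_eq_two.mp h2
      rw [wienerSet_pair _ huv, h2]
      simpa using dist_le_half hn u v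
    · have h3' : A.card = 3 := by omega
      obtain ⟨u, v, w, h1, h2', h3'', rfl⟩ := Finset.card_eq_three.mp h3'
      rw [wienerSet_triple _ h1 h2' h3'', h3']
      have hb := triple_bound hn h1 h2' h3''
      have hev : 2 * (n / 2) = n := by
        obtain ⟨m, rfl⟩ := hne
        omega
      omega

lemma ub {k : ℕ} (hk : 2 ≤ k) (hkn : k ≤ n) (hnk : n - k ≤ 2) (hne : Even n)
    {g : ZMod n → Fin k} (hg : Function.Surjective g) :
    wienerColoring (cycleGraphZMod n) g ≤ (n - k) * (n / 2) := by
  have hn2 : 2 ≤ n := hk.trans hkn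
  have hcardV : Fintype.card (ZMod n) = n := ZMod.card n
  have hsum : ∑ i : Fin k, ((colorClass g i).card - 1) = n - k := by
    rw [sum_card_sub_one hg, hcardV]
  have hle3 : ∀ i : Fin k, (colorClass g i).card ≤ 3 := by
    intro i
    have h4 : (colorClass g i).card - 1 ≤ ∑ j : Fin k, ((colorClass g j).card - 1) := by
      apply Finset.single_le_sum (f := fun j : Fin k => (colorClass g j).card - 1)
        (fun _ _ => Nat.zero_le _) (Finset.mem_univ i)
    omega
  calc wienerColoring (cycleGraphZMod n) g
      = ∑ i : Fin k, wienerSet (cycleGraphZMod n) (colorClass g i) := rfl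
    _ ≤ ∑ i : Fin k, ((colorClass g i).card - 1) * (n / 2) :=
        Finset.sum_le_sum fun i _ => class_bound hn2 hne (hle3 i)
    _ = (n - k) * (n / 2) := by rw [← Finset.sum_mul, hsum]

end P5


section Main
variable {n : ℕ} [NeZero n]

lemma nodup2 {α : Type*} {a b : α} (h1 : a ≠ b) : List.Nodup [a, b] := by simp [h1]

lemma nodup3 {α : Type*} {a b c : α} (h1 : a ≠ b) (h2 : a ≠ c) (h3 : b ≠ c) :
    List.Nodup [a, b, c] := by simp [h1, h2, h3]

lemma nodup4 {α : Type*} {a b c d : α} (h1 : a ≠ b) (h2 : a ≠ c) (h3 : a ≠ d)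
    (h4 : b ≠ c) (h5 : b ≠ d) (h6 : c ≠ d) : List.Nodup [a, b, c, d] := by
  simp [h1, h2, h3, h4, h5, h6]

lemma natCast_inj_lt {a b : ℕ} (ha : a < n) (hb : b < n) (h : (a : ZMod n) = b) : a = b := by
  rw [← ZMod.val_cast_of_lt ha, ← ZMod.val_cast_of_lt hb, h]

lemma dist_natCast (hn : 2 ≤ n) {a b : ℕ} (hab : a ≤ b) (hb : b < n) :
    (cycleGraphZMod n).dist (a : ZMod n) (b : ZMod n) = min (b - a) (n - (b - a)) := by
  rw [cycle_dist_eq hn]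
  have h1 : ((b : ZMod n) - a) = ((b - a : ℕ) : ZMod n) := by
    rw [Nat.cast_sub hab]
  rw [h1]
  unfold phi
  rw [ZMod.val_cast_of_lt (by omega)]

lemma wc_ge {k : ℕ} (f : ZMod n → Fin k) (i : Fin k) :
    wienerSet (cycleGraphZMod n) (colorClass f i) ≤ wienerColoring (cycleGraphZMod n) f := by
  apply Finset.single_le_sum (f := fun j : Fin k => wienerSet (cycleGraphZMod n) (colorClass f j))
    (fun _ _ => Nat.zero_le _) (Finset.mem_univ i)

lemma wc_ge_two {k : ℕ} (f : ZMod n → Fin k) {i j : Fin k} (hij : i ≠ j) :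
    wienerSet (cycleGraphZMod n) (colorClass f i) + wienerSet (cycleGraphZMod n) (colorClass f j)
      ≤ wienerColoring (cycleGraphZMod n) f := by
  have h := Finset.sum_le_sum_of_subset
    (f := fun j : Fin k => wienerSet (cycleGraphZMod n) (colorClass f j))
    (Finset.subset_univ ({i, j} : Finset (Fin k)))
  rwa [Finset.sum_pair hij] at h

lemma exists_big_class {k : ℕ} (hkn : k < n) {f : ZMod n → Fin k}
    (hf : Function.Surjective f) : ∃ i, 2 ≤ (colorClass f i).card := by
  by_contra hno
  push_neg at hno
  have h1 : ∑ i : Fin k, (colorClass f i).card ≤ ∑ _i : Fin k, 1 :=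
    Finset.sum_le_sum (fun i _ => by have := hno i; omega)
  rw [sum_card_colorClass, ZMod.card] at h1
  simp only [Finset.sum_const, Finset.card_univ, Fintype.card_fin, smul_eq_mul, mul_one] at h1
  omega

end Main

end CycleAux

/-- For `2 ≤ k ≤ n` with `n` even and `n − k ≤ 2`, every `k`-color weak maximizer `f` of
`W` on `C_n` attains the maximum Wiener index among `k`-color weak maximizers. -/
theorem cycle_max_small (n k : ℕ) [NeZero n] (hk : 2 ≤ k) (hkn : k ≤ n) (hn : Even n)
    (hnk : n - k ≤ 2)
    (f : ZMod n → Fin k) (hf : IsWeakMaximizer (cycleGraphZMod n) f) :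
    ∀ g : ZMod n → Fin k, IsWeakMaximizer (cycleGraphZMod n) g →
      wienerColoring (cycleGraphZMod n) g ≤ wienerColoring (cycleGraphZMod n) f := by
  
  intro g hg
  have hn2 : 2 ≤ n := hk.trans hkn
  have hub := CycleAux.ub hk hkn hnk hn hg.1
  refine hub.trans ?_
  rcases (show n = k ∨ n = k + 1 ∨ n = k + 2 by omega) with hcase | hcase | hcase
  · have h0 : n - k = 0 := by omega
    rw [h0]
    simp
  · -- n = k + 1, n even, so n ≥ 4
    have hn4 : 4 ≤ n := by rcases hn with ⟨m, hm⟩; omega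
    have heven2 : n - n / 2 = n / 2 := by rcases hn with ⟨m, hm⟩; omega
    obtain ⟨i, hi⟩ := CycleAux.exists_big_class (by omega) hf.1
    obtain ⟨a, ha, b, hb, hab⟩ := Finset.one_lt_card.mp hi
    have hfa : f a = i := by simpa [colorClass] using ha
    have hfb : f b = i := by simpa [colorClass] using hb
    have hne1 : ((0:ℕ) : ZMod n) ≠ ((n/2 : ℕ) : ZMod n) := fun h => by
      have := CycleAux.natCast_inj_lt (by omega) (by omega) h; omega
    obtain ⟨σ, hσ⟩ := CycleAux.exists_perm_list [((0:ℕ) : ZMod n), ((n/2 : ℕ) : ZMod n)] [a, b]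
      (CycleAux.nodup2 hne1) (CycleAux.nodup2 hab) rfl
    simp only [List.forall₂_cons] at hσ
    obtain ⟨hσ1, hσ2, -⟩ := hσ
    set f' := f ∘ σ with hf'
    have hle := hf.2 f' (hf.1.comp σ.surjective) (CycleAux.colorType_comp f σ)
    refine le_trans ?_ hle
    have hm0 : ((0:ℕ) : ZMod n) ∈ colorClass f' i := CycleAux.mem_colorClass (by
      rw [hf', Function.comp_apply, hσ1, hfa])
    have hmh : ((n/2:ℕ) : ZMod n) ∈ colorClass f' i := CycleAux.mem_colorClass (by
      rw [hf', Function.comp_apply, hσ2, hfb])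
    have hsub : ({((0:ℕ) : ZMod n), ((n/2:ℕ) : ZMod n)} : Finset (ZMod n)) ⊆ colorClass f' i := by
      intro x hx
      rcases Finset.mem_insert.mp hx with rfl | hx
      · exact hm0
      · rw [Finset.mem_singleton.mp hx]; exact hmh
    have hW : wienerSet (cycleGraphZMod n) {((0:ℕ):ZMod n), ((n/2:ℕ):ZMod n)} = n/2 := by
      rw [CycleAux.wienerSet_pair _ hne1,
        CycleAux.dist_natCast hn2 (Nat.zero_le _) (by omega), Nat.sub_zero, heven2, min_self]
    have h1 : n - k = 1 := by omega
    rw [h1, one_mul]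
    calc n/2 = wienerSet (cycleGraphZMod n) {((0:ℕ):ZMod n), ((n/2:ℕ):ZMod n)} := hW.symm
      _ ≤ wienerSet (cycleGraphZMod n) (colorClass f' i) := CycleAux.wienerSet_mono _ hsub
      _ ≤ wienerColoring (cycleGraphZMod n) f' := CycleAux.wc_ge f' i
  · -- n = k + 2
    have hn4 : 4 ≤ n := by omega
    have heven2 : n - n / 2 = n / 2 := by rcases hn with ⟨m, hm⟩; omega
    have h2 : n - k = 2 := by omega
    have h2n : 2 * (n / 2) = n := by omega
    rw [h2]
    have hvlt0 : (0:ℕ) < n := by omega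
    have hvlt1 : (1:ℕ) < n := by omega
    have hvlth : n/2 < n := by omega
    have hvlth1 : n/2 + 1 < n := by omega
    have hh2 : 2 ≤ n/2 := by omega
    have hd01 : ((0:ℕ) : ZMod n) ≠ ((1:ℕ) : ZMod n) := fun h => by
      have := CycleAux.natCast_inj_lt hvlt0 hvlt1 h; omega
    have hd0h : ((0:ℕ) : ZMod n) ≠ ((n/2:ℕ) : ZMod n) := fun h => by
      have := CycleAux.natCast_inj_lt hvlt0 hvlth h; omega
    have hd0h1 : ((0:ℕ) : ZMod n) ≠ ((n/2+1:ℕ) : ZMod n) := fun h => by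
      have := CycleAux.natCast_inj_lt hvlt0 hvlth1 h; omega
    have hd1h : ((1:ℕ) : ZMod n) ≠ ((n/2:ℕ) : ZMod n) := fun h => by
      have := CycleAux.natCast_inj_lt hvlt1 hvlth h; omega
    have hd1h1 : ((1:ℕ) : ZMod n) ≠ ((n/2+1:ℕ) : ZMod n) := fun h => by
      have := CycleAux.natCast_inj_lt hvlt1 hvlth1 h; omega
    have hdhh1 : ((n/2:ℕ) : ZMod n) ≠ ((n/2+1:ℕ) : ZMod n) := fun h => by
      have := CycleAux.natCast_inj_lt hvlth hvlth1 h; omega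
    have e1 : (cycleGraphZMod n).dist ((0:ℕ):ZMod n) ((n/2:ℕ):ZMod n) = n/2 := by
      rw [CycleAux.dist_natCast hn2 (Nat.zero_le _) hvlth, Nat.sub_zero, heven2, min_self]
    have e2 : (cycleGraphZMod n).dist ((1:ℕ):ZMod n) ((n/2+1:ℕ):ZMod n) = n/2 := by
      rw [CycleAux.dist_natCast hn2 (by omega) hvlth1,
        show n/2 + 1 - 1 = n/2 from by omega, heven2, min_self]
    have e3 : (cycleGraphZMod n).dist ((0:ℕ):ZMod n) ((n/2+1:ℕ):ZMod n) = n/2 - 1 := by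
      rw [CycleAux.dist_natCast hn2 (Nat.zero_le _) hvlth1, Nat.sub_zero,
        min_eq_right (by omega)]
      omega
    have e4 : (cycleGraphZMod n).dist ((0:ℕ):ZMod n) ((1:ℕ):ZMod n) = 1 := by
      rw [CycleAux.dist_natCast hn2 (Nat.zero_le _) hvlt1, Nat.sub_zero,
        min_eq_left (by omega)]
    obtain ⟨i, hi⟩ := CycleAux.exists_big_class (by omega) hf.1
    rcases Nat.lt_or_ge (colorClass f i).card 3 with hlt | hge
    · -- two pair classes
      have hex2 : ∃ j, j ≠ i ∧ 2 ≤ (colorClass f j).card := by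
        by_contra hno
        push_neg at hno
        have hsplit : (colorClass f i).card
              + ∑ j ∈ Finset.univ.erase i, (colorClass f j).card
            = ∑ j : Fin k, (colorClass f j).card :=
          Finset.add_sum_erase _ (fun j : Fin k => (colorClass f j).card) (Finset.mem_univ i)
        have herase : ∑ j ∈ Finset.univ.erase i, (colorClass f j).card
            ≤ ∑ _j ∈ Finset.univ.erase i, 1 := by
          refine Finset.sum_le_sum fun j hj => ?_
          have hji : j ≠ i := (Finset.mem_erase.mp hj).1
          have := hno j hji
          omega
        rw [Finset.sum_const, smul_eq_mul, mul_one,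
          Finset.card_erase_of_mem (Finset.mem_univ i), Finset.card_univ,
          Fintype.card_fin] at herase
        have hsum := CycleAux.sum_card_colorClass f
        rw [ZMod.card] at hsum
        omega
      obtain ⟨j, hji, hj2⟩ := hex2
      obtain ⟨a, ha, b, hb, hab⟩ := Finset.one_lt_card.mp hi
      obtain ⟨c, hc, d, hd, hcd⟩ := Finset.one_lt_card.mp hj2
      have hfa : f a = i := by simpa [colorClass] using ha
      have hfb : f b = i := by simpa [colorClass] using hb
      have hfc : f c = j := by simpa [colorClass] using hc
      have hfd : f d = j := by simpa [colorClass] using hd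
      have hac : a ≠ c := fun h => hji (by rw [← hfc, ← h, hfa])
      have had : a ≠ d := fun h => hji (by rw [← hfd, ← h, hfa])
      have hbc : b ≠ c := fun h => hji (by rw [← hfc, ← h, hfb])
      have hbd : b ≠ d := fun h => hji (by rw [← hfd, ← h, hfb])
      obtain ⟨σ, hσ⟩ := CycleAux.exists_perm_list
        [((0:ℕ) : ZMod n), ((n/2:ℕ) : ZMod n), ((1:ℕ) : ZMod n), ((n/2+1:ℕ) : ZMod n)]
        [a, b, c, d]
        (CycleAux.nodup4 hd0h hd01 hd0h1 (Ne.symm hd1h) hdhh1 hd1h1)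
        (CycleAux.nodup4 hab hac had hbc hbd hcd)
        rfl
      simp only [List.forall₂_cons] at hσ
      obtain ⟨hσ1, hσ2, hσ3, hσ4, -⟩ := hσ
      set f' := f ∘ σ with hf'
      have hle := hf.2 f' (hf.1.comp σ.surjective) (CycleAux.colorType_comp f σ)
      refine le_trans ?_ hle
      have hsubi : ({((0:ℕ) : ZMod n), ((n/2:ℕ) : ZMod n)} : Finset (ZMod n))
          ⊆ colorClass f' i := by
        intro x hx
        rcases Finset.mem_insert.mp hx with rfl | hx
        · exact CycleAux.mem_colorClass (by rw [hf', Function.comp_apply, hσ1, hfa])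
        · rw [Finset.mem_singleton.mp hx]
          exact CycleAux.mem_colorClass (by rw [hf', Function.comp_apply, hσ2, hfb])
      have hsubj : ({((1:ℕ) : ZMod n), ((n/2+1:ℕ) : ZMod n)} : Finset (ZMod n))
          ⊆ colorClass f' j := by
        intro x hx
        rcases Finset.mem_insert.mp hx with rfl | hx
        · exact CycleAux.mem_colorClass (by rw [hf', Function.comp_apply, hσ3, hfc])
        · rw [Finset.mem_singleton.mp hx]
          exact CycleAux.mem_colorClass (by rw [hf', Function.comp_apply, hσ4, hfd])
      have hWi : wienerSet (cycleGraphZMod n) {((0:ℕ):ZMod n), ((n/2:ℕ):ZMod n)} = n/2 := by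
        rw [CycleAux.wienerSet_pair _ hd0h, e1]
      have hWj : wienerSet (cycleGraphZMod n) {((1:ℕ):ZMod n), ((n/2+1:ℕ):ZMod n)} = n/2 := by
        rw [CycleAux.wienerSet_pair _ hd1h1, e2]
      calc 2 * (n/2) = n/2 + n/2 := by omega
        _ ≤ wienerSet (cycleGraphZMod n) (colorClass f' i)
            + wienerSet (cycleGraphZMod n) (colorClass f' j) := by
            refine add_le_add ?_ ?_
            · rw [← hWi]; exact CycleAux.wienerSet_mono _ hsubi
            · rw [← hWj]; exact CycleAux.wienerSet_mono _ hsubj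
        _ ≤ wienerColoring (cycleGraphZMod n) f' := CycleAux.wc_ge_two f' (Ne.symm hji)
    · -- triple class
      obtain ⟨a, ha, b, hb, c, hc, hab, hac, hbc⟩ := Finset.two_lt_card.mp hge
      have hfa : f a = i := by simpa [colorClass] using ha
      have hfb : f b = i := by simpa [colorClass] using hb
      have hfc : f c = i := by simpa [colorClass] using hc
      obtain ⟨σ, hσ⟩ := CycleAux.exists_perm_list
        [((0:ℕ) : ZMod n), ((1:ℕ) : ZMod n), ((n/2+1:ℕ) : ZMod n)] [a, b, c]
        (CycleAux.nodup3 hd01 hd0h1 hd1h1)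
        (CycleAux.nodup3 hab hac hbc)
        rfl
      simp only [List.forall₂_cons] at hσ
      obtain ⟨hσ1, hσ2, hσ3, -⟩ := hσ
      set f' := f ∘ σ with hf'
      have hle := hf.2 f' (hf.1.comp σ.surjective) (CycleAux.colorType_comp f σ)
      refine le_trans ?_ hle
      have hsub : ({((0:ℕ) : ZMod n), ((1:ℕ) : ZMod n), ((n/2+1:ℕ) : ZMod n)} : Finset (ZMod n))
          ⊆ colorClass f' i := by
        intro x hx
        rcases Finset.mem_insert.mp hx with rfl | hx
        · exact CycleAux.mem_colorClass (by rw [hf', Function.comp_apply, hσ1, hfa])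
        rcases Finset.mem_insert.mp hx with rfl | hx
        · exact CycleAux.mem_colorClass (by rw [hf', Function.comp_apply, hσ2, hfb])
        · rw [Finset.mem_singleton.mp hx]
          exact CycleAux.mem_colorClass (by rw [hf', Function.comp_apply, hσ3, hfc])
      have hW : wienerSet (cycleGraphZMod n)
          {((0:ℕ):ZMod n), ((1:ℕ):ZMod n), ((n/2+1:ℕ):ZMod n)} = n := by
        rw [CycleAux.wienerSet_triple _ hd01 hd0h1 hd1h1, e4, e3, e2]
        omega
      calc 2 * (n/2) = n := h2n
        _ = wienerSet (cycleGraphZMod n)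
              {((0:ℕ):ZMod n), ((1:ℕ):ZMod n), ((n/2+1:ℕ):ZMod n)} := hW.symm
        _ ≤ wienerSet (cycleGraphZMod n) (colorClass f' i) := CycleAux.wienerSet_mono _ hsub
        _ ≤ wienerColoring (cycleGraphZMod n) f' := CycleAux.wc_ge f' i
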